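/- Let A be a finite-dimensional anti-commutative CB-algebra over a field F of characteristic different from 2 such that dim(A/A²) = 2. Then A³ = 0, i.e., x·(y·z) = 0 for all x, y, z ∈ A. -/

import Mathlib

/-- `A² = span {x·y : x, y ∈ A}`. -/
def algSquare {F A : Type*} [Field F] [AddCommGroup A] [Module F A]
    (mul : A →ₗ[F] A →ₗ[F] A) : Submodule F A :=
  Submodule.span F {w : A | ∃ x y : A, w = mul x y}

/-- `A³ = span {u·a : u ∈ A², a ∈ A}`. -/
def algCube {F A : Type*} [Field F] [AddCommGroup A] [Module F A]
    (mul : A →ₗ[F] A →ₗ[F] A) : Submodule F A :=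
  Submodule.span F {w : A | ∃ u ∈ algSquare mul, ∃ a : A, w = mul u a}

section Aux

variable {F A : Type*} [Field F] [AddCommGroup A] [Module F A]
variable (mul : A →ₗ[F] A →ₗ[F] A)

/-- Iterated left multiplication by the entries of a list. -/
def LcOp (l : List A) : A →ₗ[F] A :=
  l.foldr (fun x f => (mul x).comp f) LinearMap.id

@[simp] lemma LcOp_nil : LcOp mul ([] : List A) = LinearMap.id := rfl
@[simp] lemma LcOp_cons (x : A) (l : List A) :
    LcOp mul (x :: l) = (mul x).comp (LcOp mul l) := rfl

lemma LcOp_append (l1 l2 : List A) :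
    LcOp mul (l1 ++ l2) = (LcOp mul l1).comp (LcOp mul l2) := by
  induction l1 with
  | nil => simp
  | cons x t ih => simp [ih, LinearMap.comp_assoc]

variable (hsq : ∀ x z : A, mul x (mul x z) = 0)

include hsq in
lemma mul_swap : ∀ x y z : A, mul x (mul y z) = - mul y (mul x z) := by
  intro x y z
  have h := hsq (x + y) z
  simp only [map_add, LinearMap.add_apply, hsq] at h
  rw [eq_neg_iff_add_eq_zero]
  linear_combination (norm := abel) h

include hsq in
lemma mul_mem_list_LcOp : ∀ (l : List A) (z x : A), x ∈ l → mul x (LcOp mul l z) = 0 := by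
  intro l
  induction l with
  | nil => intro z x hx; simp at hx
  | cons w t ih =>
    intro z x hx
    rcases List.mem_cons.mp hx with h | h
    · subst h; simpa using hsq x (LcOp mul t z)
    · have : mul x ((LcOp mul t) z) = 0 := ih z x h
      simp only [LcOp_cons, LinearMap.comp_apply]
      rw [mul_swap mul hsq x w, this, map_zero, neg_zero]

include hsq in
lemma LcOp_dup (l1 l2 : List A) (x : A) (hx : x ∈ l1) (z : A) :
    LcOp mul (l1 ++ x :: l2) z = 0 := by
  obtain ⟨p, q, rfl⟩ := List.append_of_mem hx
  have h : (p ++ x :: q) ++ x :: l2 = p ++ x :: (q ++ x :: l2) := by simp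
  rw [h, LcOp_append, LinearMap.comp_apply, LcOp_cons, LinearMap.comp_apply]
  rw [mul_mem_list_LcOp mul hsq (q ++ x :: l2) z x (by simp), map_zero]

include hsq in
lemma LcOp_zero_of_long [FiniteDimensional F A] (l : List A) (z : A)
    (hl : Module.finrank F A < l.length) : LcOp mul l z = 0 := by
  have hnli : ¬ LinearIndependent F (fun i : Fin l.length => l[(i : ℕ)]) := by
    intro h
    have := h.fintype_card_le_finrank
    simp only [Fintype.card_fin] at this
    omega
  obtain ⟨g, hg, j, hj⟩ := Fintype.not_linearIndependent_iff.mp hnli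
  set l1 := l.take (j : ℕ) with hl1
  set l2 := l.drop ((j : ℕ) + 1) with hl2
  have hsplit : l1 ++ l[(j:ℕ)] :: l2 = l := by
    rw [hl1, hl2, List.getElem_cons_drop, List.take_append_drop]
  set K : Submodule F A := LinearMap.ker ((LcOp mul l1).comp (mul.flip (LcOp mul l2 z)))
  have hmemK : ∀ y : A, y ∈ K ↔ LcOp mul (l1 ++ y :: l2) z = 0 := by
    intro y
    rw [LinearMap.mem_ker]
    constructor <;> intro h <;>
      simpa [LcOp_append, LinearMap.comp_apply] using h
  have hKother : ∀ i : Fin l.length, (i : ℕ) ≠ (j : ℕ) → l[(i:ℕ)] ∈ K := by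
    intro i hij
    rcases Nat.lt_or_ge (i : ℕ) (j : ℕ) with h | h
    · have hmem : l[(i:ℕ)] ∈ l1 := by
        rw [hl1, List.getElem_take' (xs := l) i.isLt h]
        exact List.getElem_mem _
      rw [hmemK]
      exact LcOp_dup mul hsq l1 l2 _ hmem z
    · have hgt : (j : ℕ) + 1 ≤ (i : ℕ) := by omega
      have hidx : (j:ℕ)+1 + ((i:ℕ) - ((j:ℕ)+1)) = (i:ℕ) := by omega
      have hmem : l[(i:ℕ)] ∈ l2 := by
        rw [hl2, List.mem_iff_getElem]
        refine ⟨(i:ℕ) - ((j:ℕ)+1), by rw [List.length_drop]; omega, ?_⟩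
        rw [← List.getElem_drop' (xs := l) (i := (j:ℕ)+1) (j := (i:ℕ) - ((j:ℕ)+1)) (by omega)]
        simp only [hidx]
      rw [hmemK]
      have h0 : mul (l[(i:ℕ)]) (LcOp mul l2 z) = 0 :=
        mul_mem_list_LcOp mul hsq l2 z _ hmem
      rw [LcOp_append, LinearMap.comp_apply, LcOp_cons, LinearMap.comp_apply, h0, map_zero]
  have hjK : l[(j:ℕ)] ∈ K := by
    have hrel : (g j) • l[(j:ℕ)] = - ∑ i ∈ Finset.univ.erase j, g i • l[(i:ℕ)] := by
      rw [eq_neg_iff_add_eq_zero]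
      rw [← Finset.sum_erase_add Finset.univ _ (Finset.mem_univ j)] at hg
      linear_combination (norm := abel) hg
    have hsum : (∑ i ∈ Finset.univ.erase j, g i • l[(i:ℕ)]) ∈ K := by
      apply Submodule.sum_mem
      intro i hi
      have hij : (i : ℕ) ≠ (j : ℕ) := by
        intro hc
        exact (Finset.mem_erase.mp hi).1 (Fin.ext hc)
      exact K.smul_mem _ (hKother i hij)
    have h1 : (g j) • l[(j:ℕ)] ∈ K := by rw [hrel]; exact K.neg_mem hsum
    have h2 := K.smul_mem (g j)⁻¹ h1
    rwa [smul_smul, inv_mul_cancel₀ hj, one_smul] at h2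
  rw [← hsplit]
  exact (hmemK _).mp hjK

end Aux

/-- Left-normed words `x₁·(x₂·( ⋯ ·c))` (including `c` itself). -/
inductive IsLWord {A : Type*} (mul : A → A → A) (c : A) : A → Prop
  | base : IsLWord mul c c
  | step (x w : A) : IsLWord mul c w → IsLWord mul c (mul x w)

/-- The descending chain `S 0 = A²`, `S (k+1) = A·(S k)`. -/
def Sn {F A : Type*} [Field F] [AddCommGroup A] [Module F A]
    (mul : A →ₗ[F] A →ₗ[F] A) : ℕ → Submodule F A
  | 0 => algSquare mul
  | (k+1) => Submodule.span F {w : A | ∃ x s, s ∈ Sn mul k ∧ w = mul x s}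

/-- A finite-dimensional anti-commutative CB-algebra over a field of
characteristic different from 2 with `dim (A/A²) = 2` satisfies `A³ = 0`,
i.e. `x·(y·z) = 0` for all `x, y, z`. -/
theorem stmt_13 (F : Type*) [Field F] (h2 : (2 : F) ≠ 0)
    (A : Type*) [AddCommGroup A] [Module F A] [FiniteDimensional F A]
    (mul : A →ₗ[F] A →ₗ[F] A)
    (hac : ∀ x : A, mul x x = 0)
    (hcb : ∀ x y : A, mul x y = 0 → ∀ z : A, mul (mul x z) y = 0)
    (hdim : Module.finrank F (A ⧸ algSquare mul) = 2) :
    algCube mul = ⊥ ∧ ∀ x y z : A, mul x (mul y z) = 0 := by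
  classical
  -- basic identities
  have hneg : ∀ x y : A, mul x y = - mul y x := by
    intro x y
    have h := hac (x + y)
    simp only [map_add, LinearMap.add_apply, hac] at h
    rw [eq_neg_iff_add_eq_zero]
    linear_combination (norm := abel) h
  have hsq : ∀ x z : A, mul x (mul x z) = 0 := by
    intro x z
    have h := hcb x x (hac x) z
    rw [hneg x (mul x z), h, neg_zero]
  have hswap := mul_swap mul hsq
  -- choose a b spanning A mod A²
  set sq : Submodule F A := algSquare mul with hsqdef
  obtain ⟨a, ha⟩ := Submodule.mkQ_surjective sq
    (((Module.finBasis F (A ⧸ sq)).reindex (finCongr hdim)) 0)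
  obtain ⟨b, hb⟩ := Submodule.mkQ_surjective sq
    (((Module.finBasis F (A ⧸ sq)).reindex (finCongr hdim)) 1)
  set bQ := (Module.finBasis F (A ⧸ sq)).reindex (finCongr hdim) with hbQ
  have hab : ∀ x : A, ∃ α β : F, x - α • a - β • b ∈ sq := by
    intro x
    have hsum := bQ.sum_repr (sq.mkQ x)
    rw [Fin.sum_univ_two] at hsum
    obtain ⟨α, hα⟩ : ∃ α : F, bQ.repr (sq.mkQ x) 0 = α := ⟨_, rfl⟩
    obtain ⟨β, hβ⟩ : ∃ β : F, bQ.repr (sq.mkQ x) 1 = β := ⟨_, rfl⟩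
    rw [hα, hβ] at hsum
    refine ⟨α, β, ?_⟩
    rw [← Submodule.Quotient.mk_eq_zero]
    have : sq.mkQ (x - α • a - β • b) = 0 := by
      rw [map_sub, map_sub, map_smul, map_smul, ha, hb, ← hsum]
      abel
    simpa using this
  set c : A := mul a b with hc
  have hac0 : mul a c = 0 := hsq a b
  have hbc0 : mul b c = 0 := by
    rw [hc, hswap b a b, hac b, map_zero, neg_zero]
  -- the ideal of words
  set mw : A → A → A := fun x y => mul x y with hmw
  set N : Submodule F A := Submodule.span F {w : A | IsLWord mw c w} with hN
  have hcN : c ∈ N := Submodule.subset_span IsLWord.base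
  have hker : ∀ d : A, mul d c = 0 → ∀ w, IsLWord mw c w → mul d w = 0 := by
    intro d hd w hw
    induction hw with
    | base => exact hd
    | step x w hw ih =>
      show mul d (mul x w) = 0
      rw [hswap d x w, ih, map_zero, neg_zero]
  have haN : ∀ n ∈ N, mul a n = 0 := by
    intro n hn
    exact LinearMap.mem_ker.mp ((Submodule.span_le.mpr
      (fun w hw => LinearMap.mem_ker.mpr (hker a hac0 w hw))) hn)
  have hbN : ∀ n ∈ N, mul b n = 0 := by
    intro n hn
    exact LinearMap.mem_ker.mp ((Submodule.span_le.mpr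
      (fun w hw => LinearMap.mem_ker.mpr (hker b hbc0 w hw))) hn)
  have hcN' : ∀ n ∈ N, mul c n = 0 := by
    intro n hn
    exact LinearMap.mem_ker.mp ((Submodule.span_le.mpr
      (fun w hw => LinearMap.mem_ker.mpr (hker c (hac c) w hw))) hn)
  have hNmap : ∀ x : A, ∀ n ∈ N, mul x n ∈ N := by
    intro x n hn
    have h1 : mul x n ∈ Submodule.map (mul x) N := Submodule.mem_map_of_mem hn
    rw [hN, Submodule.map_span] at h1
    refine Submodule.span_mono ?_ h1
    rintro w ⟨v, hv, rfl⟩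
    exact IsLWord.step x v hv
  have hNN : ∀ n ∈ N, ∀ m ∈ N, mul n m = 0 := by
    have hword : ∀ w, IsLWord mw c w → ∀ n ∈ N, mul n w = 0 := by
      intro w hw
      induction hw with
      | base =>
        intro n hn
        rw [hneg n c, hcN' n hn, neg_zero]
      | step x w hw ih =>
        intro n hn
        show mul n (mul x w) = 0
        rw [hswap n x w, ih n hn, map_zero, neg_zero]
    intro n hn m hm
    exact LinearMap.mem_ker.mp ((Submodule.span_le.mpr
      (fun w hw => LinearMap.mem_ker.mpr (hword w hw n hn))) hm)
  -- the descending chain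
  have hchain : ∀ k : ℕ, Sn mul k ≤ N ⊔ Sn mul (k+1) := by
    intro k
    induction k with
    | zero =>
      show algSquare mul ≤ N ⊔ Sn mul 1
      apply Submodule.span_le.mpr
      rintro w ⟨x, y, rfl⟩
      obtain ⟨α, β, hu⟩ := hab x
      obtain ⟨γ, δ, hv⟩ := hab y
      set u : A := x - α • a - β • b with hudef
      set v : A := y - γ • a - δ • b with hvdef
      have hx : x = α • a + β • b + u := by rw [hudef]; abel
      have hy : y = γ • a + δ • b + v := by rw [hvdef]; abel
      have e1 : mul x y = α • (mul a y) + β • (mul b y) + mul u y := by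
        rw [hx]
        simp [map_add, map_smul, LinearMap.add_apply, LinearMap.smul_apply]
      have e2 : mul a y = δ • c + mul a v := by
        rw [hy]
        simp [map_add, map_smul, hac a, hc]
      have e3 : mul b y = -(γ • c) + mul b v := by
        rw [hy]
        have hba : mul b a = -c := by rw [hneg b a, hc]
        simp [map_add, map_smul, hac b, hba]
      have hmulav : mul a v ∈ Sn mul 1 := Submodule.subset_span ⟨a, v, hv, rfl⟩
      have hmulbv : mul b v ∈ Sn mul 1 := Submodule.subset_span ⟨b, v, hv, rfl⟩
      have hmuluy : mul u y ∈ Sn mul 1 := by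
        rw [hneg u y]
        exact (Sn mul 1).neg_mem (Submodule.subset_span ⟨y, u, hu, rfl⟩)
      show mul x y ∈ N ⊔ Sn mul 1
      rw [e1, e2, e3]
      refine Submodule.add_mem _ (Submodule.add_mem _ ?_ ?_) ?_
      · exact Submodule.smul_mem _ _ (Submodule.add_mem _
          (Submodule.mem_sup_left (Submodule.smul_mem _ _ hcN))
          (Submodule.mem_sup_right hmulav))
      · exact Submodule.smul_mem _ _ (Submodule.add_mem _
          ((N ⊔ Sn mul 1).neg_mem (Submodule.mem_sup_left (Submodule.smul_mem _ _ hcN)))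
          (Submodule.mem_sup_right hmulbv))
      · exact Submodule.mem_sup_right hmuluy
    | succ k ih =>
      show Submodule.span F {w : A | ∃ x s, s ∈ Sn mul k ∧ w = mul x s} ≤ N ⊔ Sn mul (k+2)
      apply Submodule.span_le.mpr
      rintro w ⟨x, s, hs, rfl⟩
      obtain ⟨n, hn, t, ht, rfl⟩ := Submodule.mem_sup.mp (ih hs)
      rw [map_add]
      refine Submodule.add_mem _ (Submodule.mem_sup_left (hNmap x n hn))
        (Submodule.mem_sup_right (Submodule.subset_span ⟨x, t, ht, rfl⟩))
  have hS0k : ∀ k : ℕ, Sn mul 0 ≤ N ⊔ Sn mul k := by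
    intro k
    induction k with
    | zero => exact le_sup_right
    | succ k ih =>
      refine ih.trans ?_
      have h1 : N ⊔ Sn mul k ≤ N ⊔ (N ⊔ Sn mul (k+1)) := sup_le_sup_left (hchain k) N
      rwa [← sup_assoc, sup_idem] at h1
  -- words of length k+1 span Sn k
  have hU : ∀ k : ℕ, Sn mul k ≤
      Submodule.span F {w : A | ∃ (l : List A) (z : A), l.length = k+1 ∧ w = LcOp mul l z} := by
    intro k
    induction k with
    | zero =>
      apply Submodule.span_le.mpr
      rintro w ⟨x, y, rfl⟩
      exact Submodule.subset_span ⟨[x], y, rfl, rfl⟩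
    | succ k ih =>
      apply Submodule.span_le.mpr
      rintro w ⟨x, s, hs, rfl⟩
      have h1 : mul x s ∈ Submodule.map (mul x)
          (Submodule.span F {w : A | ∃ (l : List A) (z : A), l.length = k+1 ∧ w = LcOp mul l z}) :=
        Submodule.mem_map_of_mem (ih hs)
      rw [Submodule.map_span] at h1
      refine Submodule.span_mono ?_ h1
      rintro w ⟨v, ⟨l, z, hlen, rfl⟩, rfl⟩
      exact ⟨x :: l, z, by simp [hlen], rfl⟩
  have hSbot : Sn mul (Module.finrank F A) = ⊥ := by
    rw [eq_bot_iff]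
    refine (hU _).trans (Submodule.span_le.mpr ?_)
    rintro w ⟨l, z, hlen, rfl⟩
    rw [LcOp_zero_of_long mul hsq l z (by omega)]
    exact Submodule.zero_mem ⊥
  have hsqN : sq ≤ N := by
    have h1 := hS0k (Module.finrank F A)
    rw [hSbot, sup_bot_eq] at h1
    exact h1
  -- everything multiplies N to zero
  have hkill : ∀ n ∈ N, ∀ x : A, mul x n = 0 := by
    intro n hn x
    obtain ⟨α, β, hu⟩ := hab x
    set u : A := x - α • a - β • b with hudef
    have hx : x = α • a + β • b + u := by rw [hudef]; abel
    rw [hx]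
    simp only [map_add, map_smul, LinearMap.add_apply, LinearMap.smul_apply]
    rw [haN n hn, hbN n hn, hNN u (hsqN hu) n hn]
    simp
  constructor
  · rw [eq_bot_iff, algCube]
    apply Submodule.span_le.mpr
    rintro w ⟨u, hu, a0, rfl⟩
    have : mul u a0 = 0 := by
      rw [hneg u a0, hkill u (hsqN hu) a0, neg_zero]
    rw [this]
    exact Submodule.zero_mem ⊥
  · intro x y z
    have hyz : mul y z ∈ sq := Submodule.subset_span ⟨y, z, rfl⟩
    exact hkill (mul y z) (hsqN hyz) x
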